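/- Let n ≥ 2 and let φ : ℝⁿ ∖ {0} → ℝ be C². Define the Kelvin transform ψ(x) = |x|^{2−n} φ(x/|x|²) for x ≠ 0. If Δφ(y) = f(y) for y ≠ 0, then Δψ(x) = |x|^{−2−n} f(x/|x|²) for all x ≠ 0. -/

import Mathlib

open Finset

/-- Euclidean Laplacian, written via iterated directional derivatives. -/
noncomputable def lap {n : ℕ} (f : EuclideanSpace ℝ (Fin n) → ℝ)
    (x : EuclideanSpace ℝ (Fin n)) : ℝ :=
  ∑ i, fderiv ℝ (fun z => fderiv ℝ f z (EuclideanSpace.single i 1)) x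
    (EuclideanSpace.single i 1)

section KelvinAux

open EuclideanSpace ContinuousLinearMap

variable {n : ℕ}

private lemma sum_coord_smul (x : EuclideanSpace ℝ (Fin n)) :
    ∑ i, x i • EuclideanSpace.single i (1:ℝ) = x := by
  have := (EuclideanSpace.basisFun (Fin n) ℝ).sum_repr x
  simpa [EuclideanSpace.basisFun_apply, EuclideanSpace.basisFun_repr] using this

private lemma clm_sum (L : EuclideanSpace ℝ (Fin n) →L[ℝ] ℝ)
    (x : EuclideanSpace ℝ (Fin n)) :
    ∑ i, x i * L (EuclideanSpace.single i 1) = L x := by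
  conv_rhs => rw [← sum_coord_smul x]
  simp [smul_eq_mul]

private lemma normsq_sum (x : EuclideanSpace ℝ (Fin n)) :
    ∑ i, (x i)^2 = ‖x‖^2 := by
  rw [EuclideanSpace.norm_eq, Real.sq_sqrt (by positivity)]
  simp [Real.norm_eq_abs, sq_abs]

/-- derivative of the inversion map, as an explicit continuous linear map -/
noncomputable def Dsig (w : EuclideanSpace ℝ (Fin n)) :
    EuclideanSpace ℝ (Fin n) →L[ℝ] EuclideanSpace ℝ (Fin n) :=
  (((‖w‖^2 : ℝ))⁻¹ : ℝ) • ContinuousLinearMap.id ℝ _ +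
    (((-1 : ℝ) * (‖w‖^2 : ℝ) ^ (-2 : ℝ)) • (2 • (innerSL ℝ w))).smulRight w

private lemma hasFDerivAt_normsq (w : EuclideanSpace ℝ (Fin n)) :
    HasFDerivAt (fun w : EuclideanSpace ℝ (Fin n) => ‖w‖^2) (2 • (innerSL ℝ w)) w := by
  simpa using (hasFDerivAt_id w).norm_sq

private lemma hasFDerivAt_qpow (e : ℝ) {w : EuclideanSpace ℝ (Fin n)} (hw : w ≠ 0) :
    HasFDerivAt (fun w : EuclideanSpace ℝ (Fin n) => (‖w‖^2 : ℝ) ^ e)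
      ((e * (‖w‖^2 : ℝ) ^ (e-1)) • (2 • (innerSL ℝ w))) w :=
  (hasFDerivAt_normsq w).rpow_const (Or.inl (pow_ne_zero 2 (norm_ne_zero_iff.2 hw)))

private lemma hasFDerivAt_sigma {w : EuclideanSpace ℝ (Fin n)} (hw : w ≠ 0) :
    HasFDerivAt (fun w : EuclideanSpace ℝ (Fin n) => ((‖w‖^2 : ℝ))⁻¹ • w) (Dsig w) w := by
  have hc : HasFDerivAt (fun w : EuclideanSpace ℝ (Fin n) => ((‖w‖^2 : ℝ))⁻¹)
      (((-1 : ℝ) * (‖w‖^2 : ℝ) ^ (-2 : ℝ)) • (2 • (innerSL ℝ w))) w := by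
    have h := hasFDerivAt_qpow (n := n) (-1) hw
    have heq : (fun w : EuclideanSpace ℝ (Fin n) => (‖w‖^2 : ℝ) ^ (-1 : ℝ))
        = fun w : EuclideanSpace ℝ (Fin n) => ((‖w‖^2 : ℝ))⁻¹ := by
      funext w; rw [Real.rpow_neg_one]
    rw [heq] at h
    convert h using 2
    norm_num
  exact hc.smul (hasFDerivAt_id w)

/-- explicit first directional derivative of the Kelvin transform -/
noncomputable def KG (φ : EuclideanSpace ℝ (Fin n) → ℝ) (c : ℝ) (i : Fin n)
    (w : EuclideanSpace ℝ (Fin n)) : ℝ :=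
  2*c*(‖w‖^2 : ℝ)^(c-1) * (w i) * φ (((‖w‖^2 : ℝ))⁻¹ • w)
  + (‖w‖^2 : ℝ)^(c-1) * (fderiv ℝ φ (((‖w‖^2 : ℝ))⁻¹ • w) (EuclideanSpace.single i 1))
  - 2*(‖w‖^2 : ℝ)^(c-2) * (w i) * (fderiv ℝ φ (((‖w‖^2 : ℝ))⁻¹ • w) w)

end KelvinAux

set_option maxHeartbeats 2000000 in
open EuclideanSpace ContinuousLinearMap in
/-- Transformation law of the Laplacian under the Kelvin transform
`ψ(x) = |x|^{2−n} φ(x/|x|²)`: if `Δφ = f` off the origin, then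
`Δψ(x) = |x|^{−2−n} f(x/|x|²)`. -/
theorem stmt6 (n : ℕ) (hn : 2 ≤ n)
    (φ f : EuclideanSpace ℝ (Fin n) → ℝ)
    (hφ : ContDiffOn ℝ 2 φ {(0 : EuclideanSpace ℝ (Fin n))}ᶜ)
    (hlap : ∀ y : EuclideanSpace ℝ (Fin n), y ≠ 0 → lap φ y = f y) :
    ∀ x : EuclideanSpace ℝ (Fin n), x ≠ 0 →
      lap (fun w => ‖w‖ ^ ((2:ℝ) - n) * φ ((‖w‖ ^ 2)⁻¹ • w)) x
        = ‖x‖ ^ (-(2:ℝ) - n) * f ((‖x‖ ^ 2)⁻¹ • x) := by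
  intro x hx
  set c : ℝ := (2 - (n:ℝ))/2 with hc
  have hψfun : (fun w : EuclideanSpace ℝ (Fin n) => ‖w‖ ^ ((2:ℝ) - n) * φ ((‖w‖ ^ 2)⁻¹ • w))
      = fun w => ((‖w‖^2 : ℝ))^c * φ (((‖w‖^2 : ℝ))⁻¹ • w) := by
    funext w
    congr 1
    rw [← Real.rpow_natCast ‖w‖ 2, ← Real.rpow_mul (norm_nonneg w)]
    congr 1
    rw [hc]; ring
  -- basic differentiability facts
  have hdiff : ∀ y : EuclideanSpace ℝ (Fin n), y ≠ 0 → DifferentiableAt ℝ φ y := by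
    intro y hy
    exact (hφ.contDiffAt (isOpen_compl_singleton.mem_nhds hy)).differentiableAt (by norm_num)
  have hσne : ∀ w : EuclideanSpace ℝ (Fin n), w ≠ 0 → ((‖w‖^2 : ℝ))⁻¹ • w ≠ 0 := by
    intro w hw
    exact smul_ne_zero (inv_ne_zero (pow_ne_zero 2 (norm_ne_zero_iff.2 hw))) hw
  have hB : ∀ y : EuclideanSpace ℝ (Fin n), y ≠ 0 →
      HasFDerivAt (fderiv ℝ φ) (fderiv ℝ (fderiv ℝ φ) y) y := by
    intro y hy
    have h1 : ContDiffOn ℝ 1 (fderiv ℝ φ) {(0 : EuclideanSpace ℝ (Fin n))}ᶜ :=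
      hφ.fderiv_of_isOpen isOpen_compl_singleton (by norm_num)
    exact (((h1.contDiffAt (isOpen_compl_singleton.mem_nhds hy)).differentiableAt
      one_ne_zero).hasFDerivAt)
  -- first derivative of the Kelvin transform, off the origin
  have key1 : ∀ w : EuclideanSpace ℝ (Fin n), w ≠ 0 →
      HasFDerivAt (fun w => ((‖w‖^2 : ℝ))^c * φ (((‖w‖^2 : ℝ))⁻¹ • w))
        ((((‖w‖^2 : ℝ))^c) • ((fderiv ℝ φ (((‖w‖^2 : ℝ))⁻¹ • w)).comp (Dsig w))
          + (φ (((‖w‖^2 : ℝ))⁻¹ • w)) • ((c * (‖w‖^2 : ℝ)^(c-1)) • (2 • innerSL ℝ w))) w := by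
    intro w hw
    have hcomp : HasFDerivAt (fun w : EuclideanSpace ℝ (Fin n) => φ (((‖w‖^2 : ℝ))⁻¹ • w))
        ((fderiv ℝ φ (((‖w‖^2 : ℝ))⁻¹ • w)).comp (Dsig w)) w :=
      HasFDerivAt.comp (f := fun w : EuclideanSpace ℝ (Fin n) => ((‖w‖^2 : ℝ))⁻¹ • w) w
        ((hdiff _ (hσne w hw)).hasFDerivAt) (hasFDerivAt_sigma hw)
    exact (hasFDerivAt_qpow c hw).mul hcomp
  -- the first directional derivatives, as explicit functions
  have key2 : ∀ (i : Fin n) (w : EuclideanSpace ℝ (Fin n)), w ≠ 0 →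
      fderiv ℝ (fun w => ((‖w‖^2 : ℝ))^c * φ (((‖w‖^2 : ℝ))⁻¹ • w)) w (EuclideanSpace.single i 1)
        = KG φ c i w := by
    intro i w hw
    have hq : (0:ℝ) < ‖w‖^2 := pow_pos (norm_pos_iff.mpr hw) 2
    rw [(key1 w hw).fderiv]
    unfold KG
    simp only [ContinuousLinearMap.add_apply, ContinuousLinearMap.smul_apply,
      ContinuousLinearMap.comp_apply, Dsig, ContinuousLinearMap.smulRight_apply,
      ContinuousLinearMap.id_apply, innerSL_apply_apply, map_add, map_smul,
      EuclideanSpace.inner_single_right, starRingEnd_apply, star_trivial,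
      smul_eq_mul, map_smulₛₗ, RingHom.id_apply, nsmul_eq_mul]
    have h1 : (‖w‖^2:ℝ)^c * ((‖w‖^2:ℝ))⁻¹ = (‖w‖^2:ℝ)^(c-1) := by
      rw [← Real.rpow_neg_one, ← Real.rpow_add hq]; congr 1 <;> ring
    have h2 : (‖w‖^2:ℝ)^c * (‖w‖^2:ℝ)^(-2:ℝ) = (‖w‖^2:ℝ)^(c-2) := by
      rw [← Real.rpow_add hq]; congr 1 <;> ring
    linear_combination (fderiv ℝ φ (((‖w‖^2 : ℝ))⁻¹ • w) (EuclideanSpace.single i 1)) * h1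
      + (-2 * w i * (fderiv ℝ φ (((‖w‖^2 : ℝ))⁻¹ • w) w)) * h2
  -- abbreviations at the point x
  have hq : (0:ℝ) < ‖x‖^2 := pow_pos (norm_pos_iff.mpr hx) 2
  have hpne : ((‖x‖^2 : ℝ))⁻¹ • x ≠ 0 := hσne x hx
  -- second derivative: directional derivative of KG φ c i at x in direction eᵢ
  have hval : ∀ i : Fin n, fderiv ℝ (KG φ c i) x (EuclideanSpace.single i 1)
      = (4*c*(c-1)*(‖x‖^2:ℝ)^(c-2) * φ (((‖x‖^2 : ℝ))⁻¹ • x)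
          - 4*c*(‖x‖^2:ℝ)^(c-1)*(‖x‖^2:ℝ)^(-2:ℝ) * (fderiv ℝ φ (((‖x‖^2 : ℝ))⁻¹ • x) x)
          - 4*(c-2)*(‖x‖^2:ℝ)^(c-3) * (fderiv ℝ φ (((‖x‖^2 : ℝ))⁻¹ • x) x)
          + 4*(‖x‖^2:ℝ)^(c-2)*(‖x‖^2:ℝ)^(-2:ℝ)
              * ((fderiv ℝ (fderiv ℝ φ) (((‖x‖^2 : ℝ))⁻¹ • x) x) x)) * (x i)^2
        + (2*c*(‖x‖^2:ℝ)^(c-1)*((‖x‖^2:ℝ))⁻¹ + 2*(c-1)*(‖x‖^2:ℝ)^(c-2) - 2*(‖x‖^2:ℝ)^(c-2))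
            * (x i * fderiv ℝ φ (((‖x‖^2 : ℝ))⁻¹ • x) (EuclideanSpace.single i 1))
        + ((‖x‖^2:ℝ)^(c-1)*((‖x‖^2:ℝ))⁻¹)
            * ((fderiv ℝ (fderiv ℝ φ) (((‖x‖^2 : ℝ))⁻¹ • x) (EuclideanSpace.single i 1))
                (EuclideanSpace.single i 1))
        + (-2*(‖x‖^2:ℝ)^(c-1)*(‖x‖^2:ℝ)^(-2:ℝ))
            * (x i * (fderiv ℝ (fderiv ℝ φ) (((‖x‖^2 : ℝ))⁻¹ • x) x) (EuclideanSpace.single i 1))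
        + (-2*(‖x‖^2:ℝ)^(c-2)*((‖x‖^2:ℝ))⁻¹)
            * (x i * (fderiv ℝ (fderiv ℝ φ) (((‖x‖^2 : ℝ))⁻¹ • x) (EuclideanSpace.single i 1)) x)
        + (2*c*(‖x‖^2:ℝ)^(c-1) * φ (((‖x‖^2 : ℝ))⁻¹ • x)
            - 2*(‖x‖^2:ℝ)^(c-2) * (fderiv ℝ φ (((‖x‖^2 : ℝ))⁻¹ • x) x)) := by
    intro i
    have hproj : HasFDerivAt (fun w : EuclideanSpace ℝ (Fin n) => w i)
        (EuclideanSpace.proj (𝕜 := ℝ) i) x := (EuclideanSpace.proj (𝕜 := ℝ) i).hasFDerivAt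
    have hA1 := hasFDerivAt_qpow (n := n) (c-1) hx
    have hA2 := hasFDerivAt_qpow (n := n) (c-2) hx
    have hφσ : HasFDerivAt (fun w : EuclideanSpace ℝ (Fin n) => φ (((‖w‖^2 : ℝ))⁻¹ • w))
        ((fderiv ℝ φ (((‖x‖^2 : ℝ))⁻¹ • x)).comp (Dsig x)) x :=
      HasFDerivAt.comp (f := fun w : EuclideanSpace ℝ (Fin n) => ((‖w‖^2 : ℝ))⁻¹ • w) x
        ((hdiff _ hpne).hasFDerivAt) (hasFDerivAt_sigma hx)
    have hLσ : HasFDerivAt (fun w : EuclideanSpace ℝ (Fin n) => fderiv ℝ φ (((‖w‖^2 : ℝ))⁻¹ • w))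
        ((fderiv ℝ (fderiv ℝ φ) (((‖x‖^2 : ℝ))⁻¹ • x)).comp (Dsig x)) x :=
      HasFDerivAt.comp (f := fun w : EuclideanSpace ℝ (Fin n) => ((‖w‖^2 : ℝ))⁻¹ • w) x
        (hB _ hpne) (hasFDerivAt_sigma hx)
    have hLi : HasFDerivAt
        (fun w : EuclideanSpace ℝ (Fin n) =>
          fderiv ℝ φ (((‖w‖^2 : ℝ))⁻¹ • w) (EuclideanSpace.single i 1))
        ((fderiv ℝ φ (((‖x‖^2 : ℝ))⁻¹ • x)).comp
            (0 : EuclideanSpace ℝ (Fin n) →L[ℝ] EuclideanSpace ℝ (Fin n))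
          + ((fderiv ℝ (fderiv ℝ φ) (((‖x‖^2 : ℝ))⁻¹ • x)).comp (Dsig x)).flip
              (EuclideanSpace.single i 1)) x :=
      hLσ.clm_apply (hasFDerivAt_const (EuclideanSpace.single i (1:ℝ)) x)
    have hLw : HasFDerivAt
        (fun w : EuclideanSpace ℝ (Fin n) => fderiv ℝ φ (((‖w‖^2 : ℝ))⁻¹ • w) w)
        ((fderiv ℝ φ (((‖x‖^2 : ℝ))⁻¹ • x)).comp (ContinuousLinearMap.id ℝ _)
          + ((fderiv ℝ (fderiv ℝ φ) (((‖x‖^2 : ℝ))⁻¹ • x)).comp (Dsig x)).flip x) x :=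
      hLσ.clm_apply (hasFDerivAt_id x)
    have hT1a := hA1.const_mul ((2:ℝ)*c)
    have hT1b := hT1a.mul hproj
    have hT1 := hT1b.mul hφσ
    have hT2 := hA1.mul hLi
    have hT3 := ((hA2.const_mul (2:ℝ)).mul hproj).mul hLw
    have hG := (hT1.add hT2).sub hT3
    have hG' : HasFDerivAt (KG φ c i) _ x := hG
    rw [hG'.fderiv]
    simp only [ContinuousLinearMap.add_apply, ContinuousLinearMap.smul_apply,
      ContinuousLinearMap.sub_apply, ContinuousLinearMap.comp_apply, Dsig,
      ContinuousLinearMap.smulRight_apply, ContinuousLinearMap.id_apply, innerSL_apply_apply,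
      map_add, map_smul, EuclideanSpace.inner_single_right, starRingEnd_apply, star_trivial,
      smul_eq_mul, map_smulₛₗ, RingHom.id_apply, nsmul_eq_mul, PiLp.proj_apply,
      EuclideanSpace.single_apply, ContinuousLinearMap.zero_apply, map_zero,
      ContinuousLinearMap.flip_apply, if_true, Nat.cast_ofNat, Pi.mul_apply]
    have h1 : (‖x‖^2:ℝ)^(c-1-1) = (‖x‖^2:ℝ)^(c-2) := by rw [show c-1-1 = c-2 by ring]
    have h2 : (‖x‖^2:ℝ)^(c-2-1) = (‖x‖^2:ℝ)^(c-3) := by rw [show c-2-1 = c-3 by ring]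
    rw [h1, h2]
    ring
  -- replace the inner fderiv by KG near x and sum up
  have hEE : ∀ i : Fin n,
      fderiv ℝ (fun z => fderiv ℝ (fun w => ((‖w‖^2 : ℝ))^c * φ (((‖w‖^2 : ℝ))⁻¹ • w)) z
          (EuclideanSpace.single i 1)) x
        = fderiv ℝ (KG φ c i) x := by
    intro i
    apply Filter.EventuallyEq.fderiv_eq
    exact Filter.eventuallyEq_of_mem (isOpen_compl_singleton.mem_nhds hx)
      (fun w hw => key2 i w hw)
  rw [hψfun]
  unfold lap
  calc ∑ i, fderiv ℝ (fun z => fderiv ℝ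
          (fun w => ((‖w‖^2 : ℝ))^c * φ (((‖w‖^2 : ℝ))⁻¹ • w)) z
          (EuclideanSpace.single i 1)) x (EuclideanSpace.single i 1)
      = ∑ i, fderiv ℝ (KG φ c i) x (EuclideanSpace.single i 1) := by
        exact Finset.sum_congr rfl (fun i _ => by rw [hEE i])
    _ = ‖x‖ ^ (-(2:ℝ) - n) * f ((‖x‖ ^ 2)⁻¹ • x) := by
        rw [Finset.sum_congr rfl (fun i _ => hval i)]
        have hs3 : ∑ i, (fderiv ℝ (fderiv ℝ φ) (((‖x‖^2 : ℝ))⁻¹ • x) (EuclideanSpace.single i 1))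
            (EuclideanSpace.single i 1) = f (((‖x‖^2 : ℝ))⁻¹ • x) := by
          have hl : lap φ (((‖x‖^2 : ℝ))⁻¹ • x)
              = ∑ i, (fderiv ℝ (fderiv ℝ φ) (((‖x‖^2 : ℝ))⁻¹ • x) (EuclideanSpace.single i 1))
                  (EuclideanSpace.single i 1) := by
            unfold lap
            refine Finset.sum_congr rfl fun i _ => ?_
            rw [((hB _ hpne).clm_apply
              (hasFDerivAt_const (EuclideanSpace.single i (1:ℝ)) _)).fderiv]
            simp [ContinuousLinearMap.flip_apply]
          rw [← hlap _ hpne, hl]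
        have hflip : ∑ i, x i * (fderiv ℝ (fderiv ℝ φ) (((‖x‖^2 : ℝ))⁻¹ • x)
              (EuclideanSpace.single i 1)) x
            = (fderiv ℝ (fderiv ℝ φ) (((‖x‖^2 : ℝ))⁻¹ • x) x) x := by
          have h1 : ∀ i : Fin n, (fderiv ℝ (fderiv ℝ φ) (((‖x‖^2 : ℝ))⁻¹ • x)
                (EuclideanSpace.single i 1)) x
              = ((fderiv ℝ (fderiv ℝ φ) (((‖x‖^2 : ℝ))⁻¹ • x)).flip x)
                  (EuclideanSpace.single i 1) := fun i => rfl
          rw [Finset.sum_congr rfl (fun i _ => by rw [h1 i]),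
            clm_sum ((fderiv ℝ (fderiv ℝ φ) (((‖x‖^2 : ℝ))⁻¹ • x)).flip x) x]
          rfl
        simp only [Finset.sum_add_distrib, ← Finset.mul_sum, Finset.sum_const,
          Finset.card_univ, Fintype.card_fin, nsmul_eq_mul]
        rw [normsq_sum x, clm_sum (fderiv ℝ φ (((‖x‖^2 : ℝ))⁻¹ • x)) x, hs3,
          clm_sum (fderiv ℝ (fderiv ℝ φ) (((‖x‖^2 : ℝ))⁻¹ • x) x) x, hflip]
        have hxpos : (0:ℝ) < ‖x‖ := norm_pos_iff.mpr hx
        have hP1 : (‖x‖^2:ℝ)^(c-1) = (‖x‖^2:ℝ)^(c-3) * (‖x‖^2) * (‖x‖^2) := by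
          rw [show c-1 = (c-3) + 1 + 1 by ring, Real.rpow_add hq, Real.rpow_add hq,
            Real.rpow_one]
        have hP2 : (‖x‖^2:ℝ)^(c-2) = (‖x‖^2:ℝ)^(c-3) * (‖x‖^2) := by
          rw [show c-2 = (c-3) + 1 by ring, Real.rpow_add hq, Real.rpow_one]
        have hP3 : (‖x‖^2:ℝ)^(-2:ℝ) = ((‖x‖^2:ℝ))⁻¹ * ((‖x‖^2:ℝ))⁻¹ := by
          rw [show (-2:ℝ) = (-1) + (-1) by norm_num, Real.rpow_add hq, Real.rpow_neg_one]
        have htgt : ‖x‖ ^ (-(2:ℝ) - n) = (‖x‖^2:ℝ)^(c-3) * (‖x‖^2) := by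
          rw [show ((‖x‖^2:ℝ))^(c-3) = ‖x‖^(2*(c-3)) by
              rw [← Real.rpow_natCast ‖x‖ 2, ← Real.rpow_mul (norm_nonneg x)]; norm_num,
            show ((‖x‖:ℝ)^2) = ‖x‖^((2:ℕ):ℝ) from (Real.rpow_natCast ‖x‖ 2).symm,
            ← Real.rpow_add hxpos]
          congr 1
          rw [hc]
          push_cast
          ring
        rw [hP1, hP2, hP3, htgt, hc]
        field_simp
        ring
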